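/- Let a_i for i \in \mathbb{Z} be elements of a field. Define the generalized Eulerian numbers A(n,k) by: A(n,k)=0 for k<0 or k>n, A(0,0)=1, and A(n+1,k) = a_{n-k+2} A(n,k-1) - a_{-k} P(n,k) A(n,k), where P(n,k) = \prod_{i=1}^{n+1} (a_{n-k+2} - a_{i-k})/(a_{n-k+1} - a_{i-1-k}). Assume all quantities a_{n-k+1} - a_{i-k} appearing as denominators are nonzero. Then the generalized Worpitzky identity z^n = \sum_{k=0}^{n} A(n,k) \prod_{i=1}^{n} (z - a_{i-k})/(a_{n-k+1} - a_{i-k}) holds as a polynomial identity in z. -/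

import Mathlib

open Finset Polynomial

lemma IccRange {M : Type*} [CommMonoid M] (f : ℕ → M) (n : ℕ) :
    ∏ i ∈ Icc 1 n, f i = ∏ i ∈ range n, f (i+1) := by
  rw [← Finset.Ico_add_one_right_eq_Icc, Finset.prod_Ico_eq_prod_range]
  simp [add_comm]

noncomputable section
variable {F : Type*} [Field F]

/-- The scalar denominator product. -/
def Dp (a : ℤ → F) (n : ℕ) (k : ℤ) : F :=
  ∏ i ∈ Finset.Icc 1 n, (a ((n : ℤ) - k + 1) - a ((i : ℤ) - k))

/-- The polynomial product. -/
def Qp (a : ℤ → F) (n : ℕ) (k : ℤ) : Polynomial F :=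
  ∏ i ∈ Finset.Icc 1 n, (X - C (a ((i : ℤ) - k)))

lemma Dp_ne_zero (a : ℤ → F) (hdist : ∀ i j : ℤ, i ≠ j → a i ≠ a j) (n : ℕ) (k : ℤ) :
    Dp a n k ≠ 0 := by
  refine Finset.prod_ne_zero_iff.2 fun i hi => sub_ne_zero.2 (hdist _ _ ?_)
  have := (Finset.mem_Icc.1 hi).2
  omega

lemma Dp_succ (a : ℤ → F) (n : ℕ) (k : ℤ) :
    Dp a (n+1) k = (a ((n:ℤ) + 2 - k) - a (1 - k)) * Dp a n (k-1) := by
  unfold Dp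
  rw [IccRange, IccRange, Finset.prod_range_succ']
  rw [mul_comm]
  congr 1
  · congr 2 <;> push_cast <;> ring
  refine Finset.prod_congr rfl fun i _ => ?_
  congr 2 <;> push_cast <;> ring

lemma denom_eq (a : ℤ → F) (n : ℕ) (k : ℤ) :
    ∏ i ∈ Finset.Icc 1 (n+1), (a ((n:ℤ) - k + 1) - a ((i:ℤ) - 1 - k)) =
      (a ((n:ℤ) + 1 - k) - a (-k)) * Dp a n k := by
  unfold Dp
  rw [IccRange, IccRange, Finset.prod_range_succ']
  rw [mul_comm]
  congr 1
  · congr 2 <;> push_cast <;> ring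
  refine Finset.prod_congr rfl fun i _ => ?_
  congr 2 <;> push_cast <;> ring

lemma Qp_top (a : ℤ → F) (n : ℕ) (k : ℤ) :
    Qp a (n+1) k = Qp a n k * (X - C (a ((n:ℤ) + 1 - k))) := by
  have h : ((n+1 : ℕ) : ℤ) - k = (n:ℤ) + 1 - k := by push_cast; ring
  unfold Qp
  rw [Finset.prod_Icc_succ_top (Nat.le_add_left 1 n), h]

lemma Qp_shift (a : ℤ → F) (n : ℕ) (k : ℤ) :
    Qp a (n+1) (k+1) = (X - C (a (-k))) * Qp a n k := by
  unfold Qp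
  rw [IccRange, IccRange, Finset.prod_range_succ']
  rw [mul_comm]
  congr 1
  · congr 3; push_cast; ring
  refine Finset.prod_congr rfl fun i _ => ?_
  congr 3; push_cast; ring

lemma poly_key (a : ℤ → F) (hdist : ∀ i j : ℤ, i ≠ j → a i ≠ a j) (n : ℕ) (k : ℤ) :
    X * Qp a n k =
      C (a ((n:ℤ) + 1 - k) / (a ((n:ℤ) + 1 - k) - a (-k))) * Qp a (n+1) (k+1)
      - C (a (-k) / (a ((n:ℤ) + 1 - k) - a (-k))) * Qp a (n+1) k := by
  set p := a ((n:ℤ) + 1 - k)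
  set q := a (-k)
  have hd : p - q ≠ 0 := sub_ne_zero.2 (hdist _ _ (by omega))
  rw [Qp_shift, Qp_top]
  have h1 : C (p / (p - q)) - C (q / (p - q)) = (1 : Polynomial F) := by
    rw [← map_sub, div_sub_div_same, div_self hd, map_one]
  have h2 : C (p / (p - q)) * C q = C (q / (p - q)) * C p := by
    rw [← map_mul, ← map_mul]
    congr 1
    field_simp
  set Q := Qp a n k
  linear_combination (-(X * Q)) * h1 + Q * h2

lemma scalar_key (a : ℤ → F) (hdist : ∀ i j : ℤ, i ≠ j → a i ≠ a j)
    (A : ℕ → ℤ → F)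
    (hrec : ∀ (n : ℕ) (k : ℤ), 0 ≤ k →
      A (n+1) k = a ((n : ℤ) - k + 2) * A n (k-1) -
        a (-k) * (∏ i ∈ Finset.Icc 1 (n+1),
            (a ((n : ℤ) - k + 2) - a ((i : ℤ) - k)) /
              (a ((n : ℤ) - k + 1) - a ((i : ℤ) - 1 - k))) * A n k)
    (n : ℕ) (k : ℤ) (hk : 0 ≤ k) :
    A (n+1) k / Dp a (n+1) k =
      a ((n:ℤ) + 2 - k) * (A n (k-1) / Dp a n (k-1)) / (a ((n:ℤ) + 2 - k) - a (1-k))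
      - a (-k) * (A n k / Dp a n k) / (a ((n:ℤ) + 1 - k) - a (-k)) := by
  have hd1 : a ((n:ℤ) + 2 - k) - a (1-k) ≠ 0 := sub_ne_zero.2 (hdist _ _ (by omega))
  have hd2 : a ((n:ℤ) + 1 - k) - a (-k) ≠ 0 := sub_ne_zero.2 (hdist _ _ (by omega))
  have hD := Dp_ne_zero a hdist n k
  have hD' := Dp_ne_zero a hdist n (k-1)
  have hP : (∏ i ∈ Icc 1 (n+1), (a ((n:ℤ) - k + 2) - a ((i:ℤ) - k))) = Dp a (n+1) k := by
    unfold Dp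
    refine Finset.prod_congr rfl fun i _ => ?_
    congr 2
    push_cast; ring
  have e : (n:ℤ) - k + 2 = (n:ℤ) + 2 - k := by ring
  rw [hrec n k hk, Finset.prod_div_distrib, hP, denom_eq, Dp_succ, e]
  field_simp

/-- The "shifted" summand. -/
def Gt (a : ℤ → F) (A : ℕ → ℤ → F) (n : ℕ) (j : ℕ) : Polynomial F :=
  C (a ((n:ℤ) + 2 - j) * (A n ((j:ℤ) - 1) / Dp a n ((j:ℤ) - 1)) /
      (a ((n:ℤ) + 2 - j) - a (1 - (j:ℤ)))) * Qp a (n+1) j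

/-- The "unshifted" summand. -/
def Ht (a : ℤ → F) (A : ℕ → ℤ → F) (n : ℕ) (j : ℕ) : Polynomial F :=
  C (a (-(j:ℤ)) * (A n (j:ℤ) / Dp a n (j:ℤ)) /
      (a ((n:ℤ) + 1 - (j:ℤ)) - a (-(j:ℤ)))) * Qp a (n+1) j

end

theorem stmt9 {F : Type*} [Field F] (a : ℤ → F)
    (hdist : ∀ i j : ℤ, i ≠ j → a i ≠ a j)
    (A : ℕ → ℤ → F)
    (hbound : ∀ (n : ℕ) (k : ℤ), (k < 0 ∨ (n : ℤ) < k) → A n k = 0)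
    (hinit : A 0 0 = 1)
    (hrec : ∀ (n : ℕ) (k : ℤ), 0 ≤ k →
      A (n+1) k = a ((n : ℤ) - k + 2) * A n (k-1) -
        a (-k) * (∏ i ∈ Finset.Icc 1 (n+1),
            (a ((n : ℤ) - k + 2) - a ((i : ℤ) - k)) /
              (a ((n : ℤ) - k + 1) - a ((i : ℤ) - 1 - k))) * A n k) :
    ∀ n : ℕ, (Polynomial.X : Polynomial F) ^ n =
      ∑ k ∈ Finset.range (n+1),
        Polynomial.C (A n k / ∏ i ∈ Finset.Icc 1 n,
            (a ((n : ℤ) - k + 1) - a ((i : ℤ) - k))) *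
          ∏ i ∈ Finset.Icc 1 n,
            (Polynomial.X - Polynomial.C (a ((i : ℤ) - k))) := by
  suffices h : ∀ n : ℕ, (X : Polynomial F) ^ n =
      ∑ k ∈ Finset.range (n+1), C (A n k / Dp a n k) * Qp a n k by
    exact h
  intro n
  induction n with
  | zero => simp [Dp, Qp, hinit]
  | succ n ih =>
    have hG0 : Gt a A n 0 = 0 := by
      have hA : A n (-1 : ℤ) = 0 := hbound n (-1) (Or.inl (by norm_num))
      simp [Gt, hA]
    have hHn : Ht a A n (n+1) = 0 := by
      have hA : A n ((n:ℤ)+1) = 0 := hbound n _ (Or.inr (by omega))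
      simp [Ht, hA]
    have step1 : ∀ k ∈ Finset.range (n+1),
        C (A n (k : ℤ) / Dp a n k) * Qp a n k * X = Gt a A n (k+1) - Ht a A n k := by
      intro k _
      have hpk := poly_key a hdist n (k : ℤ)
      have e2 : (n:ℤ) + 2 - ((k:ℤ)+1) = (n:ℤ) + 1 - k := by ring
      have e3 : ((k:ℤ)+1) - 1 = (k:ℤ) := by ring
      have e4 : 1 - ((k:ℤ)+1) = -(k:ℤ) := by ring
      have hv : a ((n:ℤ) + 1 - k) * (A n (k:ℤ) / Dp a n k) / (a ((n:ℤ)+1-(k:ℤ)) - a (-(k:ℤ)))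
          = (A n (k:ℤ) / Dp a n k) * (a ((n:ℤ)+1-(k:ℤ)) / (a ((n:ℤ)+1-(k:ℤ)) - a (-(k:ℤ)))) := by
        ring
      have hu : a (-(k:ℤ)) * (A n (k:ℤ) / Dp a n k) / (a ((n:ℤ)+1-(k:ℤ)) - a (-(k:ℤ)))
          = (A n (k:ℤ) / Dp a n k) * (a (-(k:ℤ)) / (a ((n:ℤ)+1-(k:ℤ)) - a (-(k:ℤ)))) := by
        ring
      simp only [Gt, Ht, Nat.cast_add, Nat.cast_one, e2, e3, e4, hv, hu, map_mul]
      linear_combination (C (A n (k:ℤ) / Dp a n (k:ℤ))) * hpk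
    have final : ∀ k ∈ Finset.range (n+2),
        C (A (n+1) (k : ℤ) / Dp a (n+1) k) * Qp a (n+1) k = Gt a A n k - Ht a A n k := by
      intro k _
      simp only [Gt, Ht]
      rw [scalar_key a hdist A hrec n (k : ℤ) (Int.natCast_nonneg k), map_sub, sub_mul]
    calc (X : Polynomial F) ^ (n+1)
        = (∑ k ∈ Finset.range (n+1), C (A n (k:ℤ) / Dp a n k) * Qp a n k) * X := by
          rw [pow_succ, ih]
      _ = ∑ k ∈ Finset.range (n+1), C (A n (k:ℤ) / Dp a n k) * Qp a n k * X :=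
          Finset.sum_mul _ _ _
      _ = ∑ k ∈ Finset.range (n+1), (Gt a A n (k+1) - Ht a A n k) :=
          Finset.sum_congr rfl step1
      _ = (∑ k ∈ Finset.range (n+1), Gt a A n (k+1)) - ∑ k ∈ Finset.range (n+1), Ht a A n k :=
          Finset.sum_sub_distrib _ _
      _ = (∑ k ∈ Finset.range (n+2), Gt a A n k) - ∑ k ∈ Finset.range (n+2), Ht a A n k := by
          rw [Finset.sum_range_succ' (Gt a A n) (n+1), Finset.sum_range_succ (Ht a A n) (n+1),
            hG0, hHn, add_zero, add_zero]
      _ = ∑ k ∈ Finset.range (n+2), (Gt a A n k - Ht a A n k) :=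
          (Finset.sum_sub_distrib _ _).symm
      _ = ∑ k ∈ Finset.range (n+1+1), C (A (n+1) (k:ℤ) / Dp a (n+1) k) * Qp a (n+1) k :=
          (Finset.sum_congr rfl final).symm
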